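/- In Ω = Aut(T), two first-level-active elements (u,v)σ and (u',v')σ are conjugate in Ω if and only if the products uv and u'v' are conjugate in Ω. -/

import Mathlib

open Equiv

/-- Vertices of the infinite rooted binary tree: finite words over `Bool`.
The parent of a nonempty word is `dropLast`. -/
abbrev Wd := List Bool

/-- The group `Ω = Aut(T)` of automorphisms of the infinite rooted binary tree,
realized as the subgroup of permutations of the vertex set preserving length
(levels) and the parent relation. -/
def OmegaSG : Subgroup (Equiv.Perm Wd) where
  carrier := {σ | (∀ w, (σ w).length = w.length) ∧ ∀ w, (σ w).dropLast = σ w.dropLast}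
  one_mem' := ⟨fun _ => rfl, fun _ => rfl⟩
  mul_mem' := by
    rintro σ τ ⟨hσl, hσd⟩ ⟨hτl, hτd⟩
    refine ⟨fun w => ?_, fun w => ?_⟩
    · simp [Equiv.Perm.mul_apply, hσl, hτl]
    · simp [Equiv.Perm.mul_apply, hσd, hτd]
  inv_mem' := by
    rintro σ ⟨hl, hd⟩
    refine ⟨fun w => ?_, fun w => ?_⟩
    · have := hl (σ⁻¹ w)
      rw [show σ (σ⁻¹ w) = w from σ.apply_symm_apply w] at this
      exact this.symm
    · apply σ.injective
      have := hd (σ⁻¹ w)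
      rw [show σ (σ⁻¹ w) = w from σ.apply_symm_apply w] at this
      rw [← this]
      simp

/-- The section pairing: `(u,v)` acts as `u` on the subtree rooted at `false`
and as `v` on the subtree rooted at `true`. -/
def pairFun (f g : Wd → Wd) : Wd → Wd
  | [] => []
  | false :: w => false :: f w
  | true :: w => true :: g w

@[simp] lemma pairFun_nil (f g : Wd → Wd) : pairFun f g [] = [] := rfl
@[simp] lemma pairFun_false (f g : Wd → Wd) (w : Wd) :
    pairFun f g (false :: w) = false :: f w := rfl
@[simp] lemma pairFun_true (f g : Wd → Wd) (w : Wd) :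
    pairFun f g (true :: w) = true :: g w := rfl

lemma pairFun_comp (f g f' g' : Wd → Wd) (hf : ∀ w, f (f' w) = w) (hg : ∀ w, g (g' w) = w) :
    ∀ w, pairFun f g (pairFun f' g' w) = w := by
  rintro (_ | ⟨(_|_), w⟩) <;> simp [hf, hg]

/-- The permutation `(u,v)` of the tree. -/
def pairPerm (u v : Equiv.Perm Wd) : Equiv.Perm Wd where
  toFun := pairFun u v
  invFun := pairFun u.symm v.symm
  left_inv := pairFun_comp _ _ _ _ (fun w => u.symm_apply_apply w) (fun w => v.symm_apply_apply w)
  right_inv := pairFun_comp _ _ _ _ (fun w => u.apply_symm_apply w) (fun w => v.apply_symm_apply w)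

@[simp] lemma pairPerm_apply (u v : Equiv.Perm Wd) (w : Wd) :
    pairPerm u v w = pairFun u v w := rfl

/-- The first-level swap `σ`. -/
def swapPerm : Equiv.Perm Wd where
  toFun w := match w with | [] => [] | b :: w => (!b) :: w
  invFun w := match w with | [] => [] | b :: w => (!b) :: w
  left_inv := by rintro (_ | ⟨b, w⟩) <;> simp
  right_inv := by rintro (_ | ⟨b, w⟩) <;> simp

@[simp] lemma swapPerm_nil : swapPerm [] = [] := rfl
@[simp] lemma swapPerm_cons (b : Bool) (w : Wd) : swapPerm (b :: w) = (!b) :: w := rfl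

lemma swapPerm_mem : swapPerm ∈ OmegaSG := by
  constructor
  · rintro (_ | ⟨b, w⟩) <;> simp
  · rintro (_ | ⟨b, w⟩)
    · simp
    · rcases eq_or_ne w [] with rfl | hw
      · simp
      · simp only [swapPerm_cons, List.dropLast_cons_of_ne_nil hw]

lemma mem_omega_length {u : Equiv.Perm Wd} (hu : u ∈ OmegaSG) (w : Wd) :
    (u w).length = w.length := hu.1 w

lemma mem_omega_ne_nil {u : Equiv.Perm Wd} (hu : u ∈ OmegaSG) {w : Wd} (hw : w ≠ []) :
    u w ≠ [] := by
  intro h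
  exact hw (List.eq_nil_of_length_eq_zero (by rw [← hu.1 w, h]; rfl))

lemma mem_omega_nil {u : Equiv.Perm Wd} (hu : u ∈ OmegaSG) : u [] = [] :=
  List.eq_nil_of_length_eq_zero (hu.1 [])

lemma pairPerm_mem {u v : Equiv.Perm Wd} (hu : u ∈ OmegaSG) (hv : v ∈ OmegaSG) :
    pairPerm u v ∈ OmegaSG := by
  constructor
  · rintro (_ | ⟨(_|_), w⟩) <;> simp [hu.1, hv.1]
  · rintro (_ | ⟨(_|_), w⟩)
    · simp
    · rcases eq_or_ne w [] with rfl | hw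
      · simp [mem_omega_nil hu]
      · simp only [pairPerm_apply, pairFun_false, List.dropLast_cons_of_ne_nil hw,
          List.dropLast_cons_of_ne_nil (mem_omega_ne_nil hu hw)]
        rw [hu.2]
    · rcases eq_or_ne w [] with rfl | hw
      · simp [mem_omega_nil hv]
      · simp only [pairPerm_apply, pairFun_true, List.dropLast_cons_of_ne_nil hw,
          List.dropLast_cons_of_ne_nil (mem_omega_ne_nil hv hw)]
        rw [hv.2]

/-- `(u,v)` as an element of `Ω`. -/
def pairOm (u v : OmegaSG) : OmegaSG := ⟨pairPerm u.1 v.1, pairPerm_mem u.2 v.2⟩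

/-- `σ` as an element of `Ω`. -/
def swapOm : OmegaSG := ⟨swapPerm, swapPerm_mem⟩

/-! ### Levels, restriction, sign, odometers -/

/-- Level `n` of the tree: words of length `n`. -/
abbrev Lv (n : ℕ) := {w : Wd // w.length = n}

instance fintypeLv (n : ℕ) : Fintype (Lv n) := by
  apply Fintype.ofSurjective (fun g : Fin n → Bool => (⟨List.ofFn g, List.length_ofFn (f := g)⟩ : Lv n))
  rintro ⟨w, rfl⟩
  exact ⟨w.get, Subtype.ext (List.ofFn_get w)⟩

/-- The permutation induced by `g ∈ Ω` on level `n`. -/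
def levelPerm (n : ℕ) (g : OmegaSG) : Equiv.Perm (Lv n) where
  toFun w := ⟨g.1 w.1, by rw [mem_omega_length g.2, w.2]⟩
  invFun w := ⟨(g⁻¹ : OmegaSG).1 w.1, by rw [mem_omega_length (g⁻¹ : OmegaSG).2, w.2]⟩
  left_inv w := Subtype.ext (by simp)
  right_inv w := Subtype.ext (by simp)

/-- Restriction to level `n` as a group homomorphism. -/
def levelHom (n : ℕ) : OmegaSG →* Equiv.Perm (Lv n) where
  toFun := levelPerm n
  map_one' := Equiv.ext fun w => Subtype.ext rfl
  map_mul' g h := Equiv.ext fun w => Subtype.ext rfl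

/-- `sgn_n`: the sign of the permutation induced on level `n`. -/
noncomputable def sgn (n : ℕ) (g : OmegaSG) : ℤˣ := Equiv.Perm.sign (levelPerm n g)

/-- An odometer: an element acting transitively on every level of the tree. -/
def IsOdometer (g : OmegaSG) : Prop :=
  ∀ n : ℕ, ∀ v w : Lv n, ∃ k : ℤ, ((g ^ k : OmegaSG) : Equiv.Perm Wd) v.1 = w.1

/-! ### The profinite topology on `Aut(T)` -/

instance : TopologicalSpace Wd := ⊥
instance : DiscreteTopology Wd := ⟨rfl⟩
instance : TopologicalSpace (Equiv.Perm Wd) :=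
  TopologicalSpace.induced (fun g => (g : Wd → Wd)) Pi.topologicalSpace

lemma continuous_permCoe : Continuous (fun g : Equiv.Perm Wd => (g : Wd → Wd)) :=
  continuous_induced_dom

lemma continuous_permApply (w : Wd) : Continuous fun g : Equiv.Perm Wd => g w :=
  (continuous_apply w).comp continuous_permCoe

instance : IsTopologicalGroup (Equiv.Perm Wd) where
  continuous_mul := by
    apply continuous_induced_rng.2
    apply continuous_pi
    intro w
    rw [continuous_discrete_rng]
    intro y
    have h : (fun p : Equiv.Perm Wd × Equiv.Perm Wd => ((p.1 * p.2 : Equiv.Perm Wd) : Wd → Wd) w) ⁻¹' {y}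
        = ⋃ x : Wd, {p : Equiv.Perm Wd × Equiv.Perm Wd | p.2 w = x} ∩ {p | p.1 x = y} := by
      ext p
      simp only [Set.mem_preimage, Set.mem_singleton_iff, Set.mem_iUnion, Set.mem_inter_iff,
        Set.mem_setOf_eq, Equiv.Perm.mul_apply]
      constructor
      · intro hh; exact ⟨p.2 w, rfl, hh⟩
      · rintro ⟨x, rfl, hh⟩; exact hh
    show IsOpen ((fun p : Equiv.Perm Wd × Equiv.Perm Wd =>
      ((p.1 * p.2 : Equiv.Perm Wd) : Wd → Wd) w) ⁻¹' {y})
    rw [h]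
    refine isOpen_iUnion fun x => IsOpen.inter ?_ ?_
    · exact IsOpen.preimage ((continuous_permApply w).comp continuous_snd) (isOpen_discrete {x})
    · exact IsOpen.preimage ((continuous_permApply x).comp continuous_fst) (isOpen_discrete {y})
  continuous_inv := by
    apply continuous_induced_rng.2
    apply continuous_pi
    intro w
    rw [continuous_discrete_rng]
    intro y
    have h : (fun g : Equiv.Perm Wd => ((g⁻¹ : Equiv.Perm Wd) : Wd → Wd) w) ⁻¹' {y}
        = {g : Equiv.Perm Wd | g y = w} := by
      ext g
      simp only [Set.mem_preimage, Set.mem_singleton_iff, Set.mem_setOf_eq]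
      constructor
      · rintro rfl; simp
      · intro hh; rw [← hh]; simp
    show IsOpen ((fun g : Equiv.Perm Wd => ((g⁻¹ : Equiv.Perm Wd) : Wd → Wd) w) ⁻¹' {y})
    rw [h]
    exact IsOpen.preimage (continuous_permApply y) (isOpen_discrete {w})

/-! ### The recursive generators `a₁ = σ`, `a₂ = (a₃⁻¹, a₂⁻¹)σ`, `a₃ = (a₂, a₃)` -/

mutual
  /-- The underlying function of `a₂`. -/
  def pA : Wd → Wd
    | [] => []
    | false :: w => true :: piA w
    | true :: w => false :: qiA w
  /-- The underlying function of `a₃`. -/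
  def qA : Wd → Wd
    | [] => []
    | false :: w => false :: pA w
    | true :: w => true :: qA w
  /-- The underlying function of `a₂⁻¹`. -/
  def piA : Wd → Wd
    | [] => []
    | false :: w => true :: qA w
    | true :: w => false :: pA w
  /-- The underlying function of `a₃⁻¹`. -/
  def qiA : Wd → Wd
    | [] => []
    | false :: w => false :: piA w
    | true :: w => true :: qiA w
end

lemma a_inv_lemma : ∀ w : Wd, pA (piA w) = w ∧ piA (pA w) = w ∧ qA (qiA w) = w ∧ qiA (qA w) = w := by
  intro w
  induction w with
  | nil => simp [pA, qA, piA, qiA]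
  | cons b w ih =>
    cases b <;>
      simp [pA, qA, piA, qiA, ih.1, ih.2.1, ih.2.2.1, ih.2.2.2]

/-- The generator `a₂`. -/
def a2 : Equiv.Perm Wd where
  toFun := pA
  invFun := piA
  left_inv w := (a_inv_lemma w).2.1
  right_inv w := (a_inv_lemma w).1

/-- The generator `a₃`. -/
def a3 : Equiv.Perm Wd where
  toFun := qA
  invFun := qiA
  left_inv w := (a_inv_lemma w).2.2.2
  right_inv w := (a_inv_lemma w).2.2.1

lemma a_length_lemma : ∀ w : Wd, (pA w).length = w.length ∧ (qA w).length = w.length ∧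
    (piA w).length = w.length ∧ (qiA w).length = w.length := by
  intro w
  induction w with
  | nil => simp [pA, qA, piA, qiA]
  | cons b w ih =>
    cases b <;>
      simp [pA, qA, piA, qiA, ih.1, ih.2.1, ih.2.2.1, ih.2.2.2]

lemma a_ne_nil {f : Wd → Wd} (hf : ∀ w : Wd, (f w).length = w.length) {w : Wd} (hw : w ≠ []) :
    f w ≠ [] := by
  intro h
  exact hw (List.eq_nil_of_length_eq_zero (by rw [← hf w, h]; rfl))

lemma a_dropLast_lemma : ∀ w : Wd, (pA w).dropLast = pA w.dropLast ∧
    (qA w).dropLast = qA w.dropLast ∧ (piA w).dropLast = piA w.dropLast ∧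
    (qiA w).dropLast = qiA w.dropLast := by
  intro w
  induction w with
  | nil => simp [pA, qA, piA, qiA]
  | cons b w ih =>
    rcases eq_or_ne w [] with rfl | hw
    · cases b <;> simp [pA, qA, piA, qiA]
    · have hp := a_ne_nil (fun w => (a_length_lemma w).1) hw
      have hq := a_ne_nil (fun w => (a_length_lemma w).2.1) hw
      have hpi := a_ne_nil (fun w => (a_length_lemma w).2.2.1) hw
      have hqi := a_ne_nil (fun w => (a_length_lemma w).2.2.2) hw
      cases b <;>
        simp [pA, qA, piA, qiA, List.dropLast_cons_of_ne_nil hw,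
          List.dropLast_cons_of_ne_nil hp, List.dropLast_cons_of_ne_nil hq,
          List.dropLast_cons_of_ne_nil hpi, List.dropLast_cons_of_ne_nil hqi,
          ih.1, ih.2.1, ih.2.2.1, ih.2.2.2]

lemma a2_mem : a2 ∈ OmegaSG :=
  ⟨fun w => (a_length_lemma w).1, fun w => (a_dropLast_lemma w).1⟩

lemma a3_mem : a3 ∈ OmegaSG :=
  ⟨fun w => (a_length_lemma w).2.1, fun w => (a_dropLast_lemma w).2.1⟩

/-- `a₁ = σ` as an element of `Ω`. -/
def A1 : OmegaSG := swapOm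
/-- `a₂` as an element of `Ω`. -/
def A2 : OmegaSG := ⟨a2, a2_mem⟩
/-- `a₃` as an element of `Ω`. -/
def A3 : OmegaSG := ⟨a3, a3_mem⟩

/-- `G = ⟨⟨a₁, a₃⟩⟩`, the topological closure of the subgroup generated by `a₁` and `a₃`:
a model of the geometric iterated monodromy group of `f(x) = 2/(x-1)²`. -/
noncomputable def Ggrp : Subgroup OmegaSG :=
  (Subgroup.closure {A1, A3}).topologicalClosure

/-- The normal closure in `G` of the closed subgroup generated by an element `c`:
the closed subgroup generated by all `G`-conjugates of `c`. -/
noncomputable def nclG (c : OmegaSG) : Subgroup OmegaSG :=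
  (Subgroup.closure {x | ∃ g ∈ Ggrp, x = g * c * g⁻¹}).topologicalClosure

/-- `U`, the normal closure in `G` of `⟨⟨a₂a₃⁻¹⟩⟩`. -/
noncomputable def Ugrp : Subgroup OmegaSG := nclG (A2 * A3⁻¹)

/-- `H₁`, the normal closure in `G` of `⟨⟨a₁⟩⟩`. -/
noncomputable def H1grp : Subgroup OmegaSG := nclG A1

/-- `H₃`, the normal closure in `G` of `⟨⟨a₃⟩⟩`. -/
noncomputable def H3grp : Subgroup OmegaSG := nclG A3

/-! ### Auxiliary lemmas for stmt1 -/

lemma pairOm_mul' (a b c d : OmegaSG) : pairOm a b * pairOm c d = pairOm (a*c) (b*d) := by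
  apply Subtype.ext; apply Equiv.ext
  rintro (_ | ⟨(_|_), w⟩) <;>
    simp [pairOm, Equiv.Perm.mul_apply, pairPerm]

lemma pairOm_one' : pairOm 1 1 = 1 := by
  apply Subtype.ext; apply Equiv.ext
  rintro (_ | ⟨(_|_), w⟩) <;> rfl

lemma pairOm_inv' (a b : OmegaSG) : (pairOm a b)⁻¹ = pairOm a⁻¹ b⁻¹ := by
  rw [inv_eq_iff_mul_eq_one, pairOm_mul']
  simp [pairOm_one']

lemma swap_mul_pair' (a b : OmegaSG) : swapOm * pairOm a b = pairOm b a * swapOm := by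
  apply Subtype.ext; apply Equiv.ext
  rintro (_ | ⟨(_|_), w⟩) <;>
    simp [pairOm, swapOm, Equiv.Perm.mul_apply, pairPerm]

lemma swap_sq' : swapOm * swapOm = 1 := by
  apply Subtype.ext; apply Equiv.ext
  rintro (_ | ⟨(_|_), w⟩) <;> rfl

lemma pairOm_inj' {a b c d : OmegaSG} (h : pairOm a b = pairOm c d) : a = c ∧ b = d := by
  constructor <;> apply Subtype.ext <;> apply Equiv.ext <;> intro w
  · have := congrArg (fun g : OmegaSG => g.1 (false :: w)) h
    simpa [pairOm, pairPerm] using this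
  · have := congrArg (fun g : OmegaSG => g.1 (true :: w)) h
    simpa [pairOm, pairPerm] using this

lemma tail_dropLast' : ∀ l : Wd, l.dropLast.tail = l.tail.dropLast := by
  rintro (_ | ⟨a, (_ | ⟨c, t⟩)⟩) <;> simp

lemma sect_head' (g : OmegaSG) (b : Bool) : ∀ w : Wd, ∃ t, g.1 (b :: w) = g.1 [b] ++ t := by
  intro w
  induction w using List.reverseRecOn with
  | nil => exact ⟨[], by simp⟩
  | append_singleton w x ih =>
    obtain ⟨t, ht⟩ := ih
    have hne : g.1 (b :: (w ++ [x])) ≠ [] := by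
      intro h
      have := g.2.1 (b :: (w ++ [x]))
      rw [h] at this; simp at this
    have hd : (g.1 (b :: (w ++ [x]))).dropLast = g.1 (b :: w) := by
      have h2 : (b :: (w ++ [x])).dropLast = b :: w := by
        rw [List.dropLast_cons_of_ne_nil (by simp), List.dropLast_concat]
      rw [g.2.2 (b :: (w ++ [x])), h2]
    refine ⟨t ++ [(g.1 (b :: (w ++ [x]))).getLast hne], ?_⟩
    conv_lhs => rw [← List.dropLast_append_getLast hne]
    rw [hd, ht, List.append_assoc]

lemma level1' (g : OmegaSG) (b : Bool) : ∃ c, g.1 [b] = [c] := by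
  have h := g.2.1 [b]
  rcases hl : g.1 [b] with _ | ⟨c, t⟩
  · rw [hl] at h; simp at h
  · rw [hl] at h; simp at h
    exact ⟨c, by rw [h]⟩

lemma sect_exists' (g : OmegaSG) (b b' : Bool) (hb : g.1 [b] = [b']) :
    ∃ s : OmegaSG, ∀ w, s.1 w = (g.1 (b :: w)).tail := by
  have hbinv : (g⁻¹ : OmegaSG).1 [b'] = [b] := by
    have : (g.1)⁻¹ (g.1 [b]) = [b] := g.1.symm_apply_apply _
    rw [hb] at this; exact this
  have hcons : ∀ w, b' :: (g.1 (b :: w)).tail = g.1 (b :: w) := by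
    intro w
    obtain ⟨t, ht⟩ := sect_head' g b w
    rw [ht, hb]; rfl
  have hconsInv : ∀ w, b :: ((g⁻¹ : OmegaSG).1 (b' :: w)).tail = (g⁻¹ : OmegaSG).1 (b' :: w) := by
    intro w
    obtain ⟨t, ht⟩ := sect_head' g⁻¹ b' w
    rw [ht, hbinv]; rfl
  refine ⟨⟨⟨fun w => (g.1 (b :: w)).tail, fun w => ((g⁻¹ : OmegaSG).1 (b' :: w)).tail,
    fun w => ?_, fun w => ?_⟩, ?_, ?_⟩, fun w => rfl⟩
  · show ((g⁻¹ : OmegaSG).1 (b' :: (g.1 (b :: w)).tail)).tail = w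
    rw [hcons w]
    show ((g.1)⁻¹ (g.1 (b :: w))).tail = w
    rw [show (g.1)⁻¹ (g.1 (b :: w)) = b :: w from g.1.symm_apply_apply _]
    rfl
  · show (g.1 (b :: ((g⁻¹ : OmegaSG).1 (b' :: w)).tail)).tail = w
    rw [hconsInv w]
    show (g.1 ((g.1)⁻¹ (b' :: w))).tail = w
    rw [show g.1 ((g.1)⁻¹ (b' :: w)) = b' :: w from g.1.apply_symm_apply _]
    rfl
  · intro w
    show ((g.1 (b :: w)).tail).length = w.length
    have := g.2.1 (b :: w)
    rw [List.length_tail, this]; rfl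
  · intro w
    show ((g.1 (b :: w)).tail).dropLast = (g.1 (b :: w.dropLast)).tail
    rcases eq_or_ne w [] with rfl | hw
    · simp [hb]
    · rw [← tail_dropLast', g.2.2 (b :: w), List.dropLast_cons_of_ne_nil hw]

lemma decomp' (g : OmegaSG) : ∃ a b : OmegaSG, g = pairOm a b ∨ g = pairOm a b * swapOm := by
  obtain ⟨c, hc⟩ := level1' g false
  have hc' : g.1 [true] = [!c] := by
    obtain ⟨c', hc'⟩ := level1' g true
    rcases Bool.eq_or_eq_not c' c with rfl | rfl
    · exfalso
      have : g.1 [false] = g.1 [true] := by rw [hc, hc']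
      have := g.1.injective this
      simp at this
    · exact hc'
  obtain ⟨s0, hs0⟩ := sect_exists' g false c hc
  obtain ⟨s1, hs1⟩ := sect_exists' g true (!c) hc'
  cases c with
  | false =>
    refine ⟨s0, s1, Or.inl ?_⟩
    apply Subtype.ext; apply Equiv.ext
    rintro (_ | ⟨(_|_), w⟩)
    · simpa [pairOm] using mem_omega_nil g.2
    · show g.1 (false :: w) = pairFun s0.1 s1.1 (false :: w)
      obtain ⟨t, ht⟩ := sect_head' g false w
      rw [pairFun_false, hs0, ht, hc]
      rfl
    · show g.1 (true :: w) = pairFun s0.1 s1.1 (true :: w)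
      obtain ⟨t, ht⟩ := sect_head' g true w
      rw [pairFun_true, hs1, ht, hc']
      rfl
  | true =>
    refine ⟨s1, s0, Or.inr ?_⟩
    apply Subtype.ext; apply Equiv.ext
    rintro (_ | ⟨(_|_), w⟩)
    · simpa [pairOm, swapOm, Equiv.Perm.mul_apply] using mem_omega_nil g.2
    · show g.1 (false :: w) = (pairPerm s1.1 s0.1) (swapPerm (false :: w))
      simp only [swapPerm_cons, Bool.not_false, pairPerm_apply, pairFun_true]
      obtain ⟨t, ht⟩ := sect_head' g false w
      rw [hs0, ht, hc]
      rfl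
    · show g.1 (true :: w) = (pairPerm s1.1 s0.1) (swapPerm (true :: w))
      simp only [swapPerm_cons, Bool.not_true, pairPerm_apply, pairFun_false]
      obtain ⟨t, ht⟩ := sect_head' g true w
      rw [hs1, ht, hc']
      rfl

lemma swap_inv' : swapOm⁻¹ = swapOm := inv_eq_of_mul_eq_one_right swap_sq'

lemma swap_pair_swap' (x y : OmegaSG) : swapOm * (pairOm x y * swapOm) = pairOm y x := by
  rw [← mul_assoc, swap_mul_pair', mul_assoc, swap_sq', mul_one]

lemma isConj_iff'' (x y : OmegaSG) : IsConj x y ↔ ∃ c : OmegaSG, c * x = y * c := by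
  rw [isConj_iff]
  constructor
  · rintro ⟨c, hc⟩
    exact ⟨c, mul_inv_eq_iff_eq_mul.mp hc⟩
  · rintro ⟨c, hc⟩
    exact ⟨c, mul_inv_eq_iff_eq_mul.mpr hc⟩

/-- In `Ω = Aut(T)`, `(u,v)σ` and `(u',v')σ` are conjugate
iff `uv` and `u'v'` are conjugate. -/
theorem stmt1 (u v u' v' : OmegaSG) :
    IsConj (pairOm u v * swapOm) (pairOm u' v' * swapOm) ↔ IsConj (u * v) (u' * v') := by
  constructor
  · intro hg0
    obtain ⟨g, hg⟩ := (isConj_iff'' _ _).mp hg0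
    obtain ⟨a, b, rfl | rfl⟩ := decomp' g
    · rw [← mul_assoc, pairOm_mul', mul_assoc (pairOm u' v'), swap_mul_pair',
        ← mul_assoc, pairOm_mul'] at hg
      have h := pairOm_inj' (mul_right_cancel hg)
      refine (isConj_iff'' _ _).mpr ⟨a, ?_⟩
      calc a * (u * v) = (a * u) * v := by rw [mul_assoc]
        _ = (u' * b) * v := by rw [h.1]
        _ = u' * (b * v) := by rw [mul_assoc]
        _ = u' * (v' * a) := by rw [h.2]
        _ = (u' * v') * a := by rw [mul_assoc]
    · rw [mul_assoc (pairOm a b), swap_pair_swap', pairOm_mul',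
        mul_assoc (pairOm u' v'), swap_pair_swap', pairOm_mul'] at hg
      have h := pairOm_inj' hg
      refine (isConj_iff'' _ _).mpr ⟨a * v, ?_⟩
      calc (a * v) * (u * v) = ((a * v) * u) * v := by group
        _ = ((u' * b) * u) * v := by rw [h.1]
        _ = (u' * (b * u)) * v := by group
        _ = (u' * (v' * a)) * v := by rw [h.2]
        _ = (u' * v') * (a * v) := by group
  · intro hc0
    obtain ⟨c, hc⟩ := (isConj_iff'' _ _).mp hc0
    refine (isConj_iff'' _ _).mpr ⟨pairOm c (u'⁻¹ * c * u), ?_⟩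
    rw [← mul_assoc, pairOm_mul', mul_assoc (pairOm u' v'), swap_mul_pair',
      ← mul_assoc, pairOm_mul']
    have e1 : c * u = u' * (u'⁻¹ * c * u) := by group
    have e2 : (u'⁻¹ * c * u) * v = v' * c := by
      have h3 : u' * ((u'⁻¹ * c * u) * v) = u' * (v' * c) := by
        calc u' * ((u'⁻¹ * c * u) * v) = c * (u * v) := by group
          _ = (u' * v') * c := hc
          _ = u' * (v' * c) := by rw [mul_assoc]
      exact mul_left_cancel h3
    rw [e1, e2]
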